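/- Let m = 2^ℓ + n with 0 ≤ n < 2^ℓ. Then for 1 ≤ p ≤ ℓ+1 the multilevel error of the Gaussian quasi-interpolation scheme started at spacing 1 satisfies M_{1,p} c_m = c_m − Σ_{j=0}^{p−1} M_{1/2^{j+1}, p−1−j} Q_{1/2^j} c_{n mod 2^j}. -/

import Mathlib

open Real

/-- Gaussian. -/
noncomputable def psi (x : ℝ) : ℝ := (1 / Real.sqrt (2 * Real.pi)) * Real.exp (-x ^ 2 / 2)

lemma psi_nonneg (x : ℝ) : 0 ≤ psi x := by
  unfold psi; positivity

noncomputable def gg (k : ℤ) : ℝ :=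
  (1 / Real.sqrt (2 * Real.pi)) * Real.exp (-(k : ℝ) ^ 2 / 2 + |(k : ℝ)|)

lemma summable_gg : Summable gg := by
  apply Summable.mul_left
  have hnat : Summable fun n : ℕ => Real.exp (-(n : ℝ) ^ 2 / 2 + n) := by
    apply Summable.of_nonneg_of_le (fun n => (Real.exp_pos _).le)
      (fun n => ?_) (summable_exp_neg_nat.mul_left (Real.exp 2))
    rw [← Real.exp_add]
    apply Real.exp_le_exp.2
    nlinarith [sq_nonneg ((n : ℝ) - 2)]
  apply Summable.of_nat_of_neg
  · simpa using hnat
  · refine hnat.congr (fun n => ?_)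
    push_cast
    rw [abs_neg, abs_of_nonneg (Nat.cast_nonneg n)]
    ring_nf

lemma psi_le_gg {t : ℝ} (ht0 : 0 ≤ t) (ht1 : t ≤ 1) (k : ℤ) : psi (t - k) ≤ gg k := by
  unfold psi gg
  apply mul_le_mul_of_nonneg_left _ (by positivity)
  apply Real.exp_le_exp.2
  rcases le_or_gt 0 (k : ℝ) with hk | hk
  · rw [abs_of_nonneg hk]; nlinarith
  · rw [abs_of_neg hk]; nlinarith

lemma summable_psi_frac {t : ℝ} (ht0 : 0 ≤ t) (ht1 : t ≤ 1) :
    Summable fun k : ℤ => psi (t - k) :=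
  Summable.of_nonneg_of_le (fun k => psi_nonneg _) (fun k => psi_le_gg ht0 ht1 k) summable_gg

lemma summable_psi (y : ℝ) : Summable fun ℓ : ℤ => psi (y - ℓ) := by
  have h := (summable_psi_frac (Int.fract_nonneg y) (Int.fract_lt_one y).le)
  have := (Equiv.addRight (⌊y⌋ : ℤ)).summable_iff
    (f := fun ℓ : ℤ => psi (y - ℓ))
  rw [← this]
  apply h.congr
  intro k
  congr 1
  rw [Equiv.coe_addRight, Int.fract]
  push_cast
  ring

lemma tsum_psi_le (y : ℝ) : ∑' ℓ : ℤ, psi (y - ℓ) ≤ ∑' k : ℤ, gg k := by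
  rw [← (Equiv.addRight (⌊y⌋ : ℤ)).tsum_eq (fun ℓ : ℤ => psi (y - ℓ))]
  have heq : ∀ k : ℤ, psi (y - ((Equiv.addRight (⌊y⌋ : ℤ)) k)) = psi (Int.fract y - k) := by
    intro k
    congr 1
    rw [Equiv.coe_addRight, Int.fract]
    push_cast
    ring
  calc ∑' k : ℤ, psi (y - ((Equiv.addRight (⌊y⌋ : ℤ)) k))
      ≤ ∑' k : ℤ, gg k := by
        apply Summable.tsum_le_tsum _ _ summable_gg
        · intro k
          rw [heq k]
          exact psi_le_gg (Int.fract_nonneg y) (Int.fract_lt_one y).le k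
        · have := summable_psi_frac (Int.fract_nonneg y) (Int.fract_lt_one y).le
          apply Summable.congr this
          intro k; exact (heq k).symm


/-- Gaussian quasi-interpolation at spacing `h`. -/
noncomputable def Q (h : ℝ) (f : ℝ → ℝ) : ℝ → ℝ :=
  fun x => ∑' ℓ : ℤ, f (h * ℓ) * psi (x / h - ℓ)

/-- `c m x = cos(2πmx)`. -/
noncomputable def c (m : ℕ) (x : ℝ) : ℝ := Real.cos (2 * Real.pi * m * x)

/-- Multilevel error operator: `M h 0 = Id`,
`M h (p+1) f = M h p f − Q (h/2^p) (M h p f)`. -/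
noncomputable def M (h : ℝ) : ℕ → (ℝ → ℝ) → (ℝ → ℝ)
  | 0, f => f
  | p + 1, f => M h p f - Q (h / 2 ^ p) (M h p f)

def Bdd (f : ℝ → ℝ) : Prop := ∃ C, ∀ x, |f x| ≤ C

lemma Bdd.sub {f g : ℝ → ℝ} (hf : Bdd f) (hg : Bdd g) : Bdd (f - g) := by
  obtain ⟨C, hC⟩ := hf; obtain ⟨D, hD⟩ := hg
  exact ⟨C + D, fun x => (abs_sub (f x) (g x)).trans (add_le_add (hC x) (hD x))⟩

lemma summable_mul_psi {f : ℝ → ℝ} {C : ℝ} (hf : ∀ y, |f y| ≤ C) (h x : ℝ) :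
    Summable fun ℓ : ℤ => f (h * ℓ) * psi (x / h - ℓ) := by
  apply Summable.of_abs
  apply Summable.of_nonneg_of_le (fun ℓ => abs_nonneg _) (fun ℓ => ?_)
    ((summable_psi (x / h)).mul_left C)
  rw [abs_mul, abs_of_nonneg (psi_nonneg _)]
  exact mul_le_mul_of_nonneg_right (hf _) (psi_nonneg _)

lemma Q_bdd {f : ℝ → ℝ} (hf : Bdd f) (h : ℝ) : Bdd (Q h f) := by
  obtain ⟨C, hC⟩ := hf
  refine ⟨C * ∑' k : ℤ, gg k, fun x => ?_⟩
  have h1 : |Q h f x| ≤ ∑' ℓ : ℤ, |f (h * ℓ) * psi (x / h - ℓ)| := by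
    simpa only [Q, Real.norm_eq_abs] using
      norm_tsum_le_tsum_norm (f := fun ℓ : ℤ => f (h * ℓ) * psi (x / h - ℓ))
      ((summable_mul_psi hC h x).abs)
  refine h1.trans ?_
  calc ∑' ℓ : ℤ, |f (h * ℓ) * psi (x / h - ℓ)|
      ≤ ∑' ℓ : ℤ, C * psi (x / h - ℓ) := by
        apply Summable.tsum_le_tsum _ (summable_mul_psi hC h x).abs
          ((summable_psi (x / h)).mul_left C)
        intro ℓ
        rw [abs_mul, abs_of_nonneg (psi_nonneg _)]
        exact mul_le_mul_of_nonneg_right (hC _) (psi_nonneg _)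
    _ = C * ∑' ℓ : ℤ, psi (x / h - ℓ) := tsum_mul_left
    _ ≤ C * ∑' k : ℤ, gg k := by
        apply mul_le_mul_of_nonneg_left (tsum_psi_le _)
        exact (abs_nonneg (f 0)).trans (hC 0)

lemma Q_sub {f g : ℝ → ℝ} (hf : Bdd f) (hg : Bdd g) (h : ℝ) :
    Q h (f - g) = Q h f - Q h g := by
  obtain ⟨C, hC⟩ := hf; obtain ⟨D, hD⟩ := hg
  funext x
  simp only [Q, Pi.sub_apply, sub_mul]
  exact Summable.tsum_sub (summable_mul_psi hC h x) (summable_mul_psi hD h x)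

lemma M_bdd {f : ℝ → ℝ} (hf : Bdd f) (h : ℝ) (p : ℕ) : Bdd (M h p f) := by
  induction p with
  | zero => exact hf
  | succ p ih => exact ih.sub (Q_bdd ih _)

lemma M_sub {f g : ℝ → ℝ} (hf : Bdd f) (hg : Bdd g) (h : ℝ) (p : ℕ) :
    M h p (f - g) = M h p f - M h p g := by
  induction p with
  | zero => rfl
  | succ p ih =>
    show M h p (f - g) - Q (h / 2 ^ p) (M h p (f - g)) = _
    rw [ih, Q_sub (M_bdd hf h p) (M_bdd hg h p)]
    show _ = (M h p f - Q (h / 2 ^ p) (M h p f)) - (M h p g - Q (h / 2 ^ p) (M h p g))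
    abel

lemma M_step : ∀ (p : ℕ) (h : ℝ) (f : ℝ → ℝ), M h (p + 1) f = M (h / 2) p (f - Q h f) := by
  intro p
  induction p with
  | zero => intro h f; show M h 0 f - Q (h / 2 ^ 0) (M h 0 f) = f - Q h f; simp [M]
  | succ p ih =>
    intro h f
    show M h (p + 1) f - Q (h / 2 ^ (p + 1)) (M h (p + 1)  f) = _
    rw [ih h f]
    show _ = M (h / 2) p (f - Q h f) - Q (h / 2 / 2 ^ p) (M (h / 2) p (f - Q h f))
    congr 2
    rw [pow_succ]
    ring

lemma lemA : ∀ (p : ℕ) (h : ℝ) (f : ℝ → ℝ), Bdd f →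
    M h p f = f - ∑ j ∈ Finset.range p, M (h / 2 ^ (j + 1)) (p - 1 - j) (Q (h / 2 ^ j) f) := by
  intro p
  induction p with
  | zero => intro h f _; simp [M]
  | succ p ih =>
    intro h f hf
    have hQ : Bdd (Q h f) := Q_bdd hf h
    have e0 : ∀ j : ℕ, h / 2 / 2 ^ j = h / 2 ^ (j + 1) := by
      intro j; rw [pow_succ]; ring
    have e1 : ∀ j : ℕ, p + 1 - 1 - (j + 1) = p - 1 - j := by intro j; omega
    have e2 : p + 1 - 1 - 0 = p := by omega
    have ihQ := ih (h / 2) (Q h f) hQ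
    simp only [e0] at ihQ
    rw [M_step p h f, ih (h / 2) (f - Q h f) (hf.sub hQ)]
    have hsum : ∀ j ∈ Finset.range p,
        M (h / 2 / 2 ^ (j + 1)) (p - 1 - j) (Q (h / 2 / 2 ^ j) (f - Q h f)) =
          M (h / 2 / 2 ^ (j + 1)) (p - 1 - j) (Q (h / 2 / 2 ^ j) f) -
          M (h / 2 / 2 ^ (j + 1)) (p - 1 - j) (Q (h / 2 / 2 ^ j) (Q h f)) := by
      intro j _
      rw [Q_sub hf hQ, M_sub (Q_bdd hf _) (Q_bdd hQ _)]
    rw [Finset.sum_congr rfl hsum, Finset.sum_sub_distrib, Finset.sum_range_succ']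
    simp only [e0, e1, e2, zero_add, pow_one, pow_zero, div_one]
    rw [ihQ]
    abel

lemma Q_freq (j m : ℕ) : Q ((1 : ℝ) / 2 ^ j) (c m) = Q ((1 : ℝ) / 2 ^ j) (c (m % 2 ^ j)) := by
  funext x
  unfold Q
  apply tsum_congr
  intro ℓ
  congr 1
  unfold c
  have h2 : ((2 : ℝ) ^ j) ≠ 0 := by positivity
  have hm : ((2 ^ j * (m / 2 ^ j) + m % 2 ^ j : ℕ) : ℝ) = (m : ℝ) := by
    rw [Nat.div_add_mod]
  push_cast at hm
  have cast1 : ((((m / 2 ^ j : ℕ) : ℤ) * ℓ : ℤ) : ℝ) = ((m / 2 ^ j : ℕ) : ℝ) * (ℓ : ℝ) := by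
    rw [Int.cast_mul, Int.cast_natCast]
  have key : 2 * π * m * ((1 : ℝ) / 2 ^ j * ℓ) =
      2 * π * (m % 2 ^ j : ℕ) * ((1 : ℝ) / 2 ^ j * ℓ) +
        (((m / 2 ^ j : ℕ) : ℤ) * ℓ : ℤ) * (2 * π) := by
    rw [cast1, ← hm]
    field_simp
    ring
  rw [key, Real.cos_add_int_mul_two_pi]

lemma bdd_c (m : ℕ) : Bdd (c m) := ⟨1, fun x => Real.abs_cos_le_one _⟩

/-- For `m = 2^ℓ + n` with `0 ≤ n < 2^ℓ` and `1 ≤ p ≤ ℓ+1`,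
`M_{1,p} c_m = c_m − Σ_{j=0}^{p−1} M_{1/2^{j+1}, p−1−j} Q_{1/2^j} c_{n mod 2^j}`. -/
theorem multilevel_error_high_frequency (l n : ℕ) (hn : n < 2 ^ l)
    (p : ℕ) (hp1 : 1 ≤ p) (hp2 : p ≤ l + 1) :
    M 1 p (c (2 ^ l + n)) =
      c (2 ^ l + n) -
        ∑ j ∈ Finset.range p,
          M (1 / 2 ^ (j + 1)) (p - 1 - j) (Q (1 / 2 ^ j) (c (n % 2 ^ j))) := by
  rw [lemA p 1 (c (2 ^ l + n)) (bdd_c _)]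
  congr 1
  apply Finset.sum_congr rfl
  intro j hj
  have hjl : j ≤ l := by
    have := Finset.mem_range.mp hj; omega
  congr 1
  rw [Q_freq j (2 ^ l + n)]
  have h2l : 2 ^ l + n = 2 ^ j * 2 ^ (l - j) + n := by
    rw [← pow_add]; congr 2; omega
  rw [h2l, Nat.mul_add_mod]
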